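/- For every dimension d ≥ 1 and every integer n ≥ 0 there exists a constant A_n < ∞ (depending only on n and d) such that for all δ > 0, all y ∈ ℝ^d and all x ∈ ℝ^d, the n-th total derivative of the weight function φ_{δ,y} satisfies ‖∇ⁿφ_{δ,y}(x)‖ ≤ A_n δⁿ φ_{δ,y}(x). -/

import Mathlib

open Set Real Nat

/-- The weight function `φ_{δ,y}(x) = exp(−√(1+δ²|x−y|²))` on `ℝ^d`. -/
noncomputable def phi (d : ℕ) (δ : ℝ) (y x : EuclideanSpace ℝ (Fin d)) : ℝ :=
  Real.exp (-Real.sqrt (1 + δ ^ 2 * ‖x - y‖ ^ 2))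

/-- iterated derivative of `t ↦ (1+b t)^(1/2)` on `Ioi (-(1/b))`. -/
lemma iteratedDeriv_sqrt_affine (b : ℝ) (hb : 0 < b) (k : ℕ) :
    ∀ t ∈ Set.Ioi (-(1/b)), iteratedDeriv k (fun u : ℝ => (1 + b*u) ^ ((1:ℝ)/2)) t
      = (∏ j ∈ Finset.range k, ((1:ℝ)/2 - j)) * b^k * (1 + b*t) ^ ((1:ℝ)/2 - k) := by
  have hpos : ∀ u ∈ Set.Ioi (-(1/b)), 0 < 1 + b * u := by
    intro u hu
    have h1 : -(1/b) < u := hu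
    have h2 : b * (-(1/b)) < b * u := by
      exact (mul_lt_mul_iff_right₀ hb).2 h1
    have h3 : b * (1/b) = 1 := mul_one_div_cancel hb.ne'
    have : b * (-(1/b)) = -1 := by rw [mul_neg, h3]
    linarith
  induction k with
  | zero => intro t ht; simp
  | succ k ih =>
    intro t ht
    have hnhds : Set.Ioi (-(1/b)) ∈ nhds t := isOpen_Ioi.mem_nhds ht
    rw [iteratedDeriv_succ]
    have hcong : deriv (iteratedDeriv k (fun u : ℝ => (1 + b*u) ^ ((1:ℝ)/2))) t
        = deriv (fun u => (∏ j ∈ Finset.range k, ((1:ℝ)/2 - j)) * b^k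
            * (1 + b*u) ^ ((1:ℝ)/2 - k)) t := by
      apply Filter.EventuallyEq.deriv_eq
      exact Filter.eventuallyEq_of_mem hnhds (fun u hu => ih u hu)
    rw [hcong]
    have h1 : HasDerivAt (fun u : ℝ => 1 + b*u) b t := by
      simpa using ((hasDerivAt_id t).const_mul b).const_add 1
    have h2 : HasDerivAt (fun u : ℝ => (1+b*u) ^ ((1:ℝ)/2 - k))
        (b * ((1:ℝ)/2 - k) * (1+b*t) ^ ((1:ℝ)/2 - k - 1)) t :=
      h1.rpow_const (Or.inl (hpos t ht).ne')
    have h3 := (h2.const_mul ((∏ j ∈ Finset.range k, ((1:ℝ)/2 - j)) * b^k)).deriv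
    rw [h3]
    have hexp : (1:ℝ)/2 - (k:ℝ) - 1 = (1:ℝ)/2 - ((k+1 : ℕ) : ℝ) := by push_cast; ring
    rw [hexp, Finset.prod_range_succ]
    push_cast
    ring

lemma abs_prod_half_sub_le (k : ℕ) :
    |∏ j ∈ Finset.range k, ((1:ℝ)/2 - j)| ≤ (k ! : ℝ) := by
  induction k with
  | zero => simp
  | succ k ih =>
    rw [Finset.prod_range_succ, abs_mul]
    have h1 : |(1:ℝ)/2 - k| ≤ (k:ℝ) + 1 := by
      rw [abs_le]
      constructor
      · have : (0:ℝ) ≤ k := Nat.cast_nonneg k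
        linarith
      · have : (0:ℝ) ≤ k := Nat.cast_nonneg k
        linarith
    calc |∏ j ∈ Finset.range k, ((1:ℝ)/2 - j)| * |(1:ℝ)/2 - k|
        ≤ (k ! : ℝ) * ((k:ℝ) + 1) := by
          apply mul_le_mul ih h1 (abs_nonneg _) (Nat.cast_nonneg _)
      _ = ((k+1)! : ℝ) := by
          rw [Nat.factorial_succ]; push_cast; ring

set_option maxHeartbeats 1000000 in
/-- Key bound on the derivatives of `x ↦ √(1+δ²‖x-y‖²)`. -/
lemma sqrt_deriv_bound (d : ℕ) (δ : ℝ) (hδ : 0 < δ) (y x : EuclideanSpace ℝ (Fin d))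
    (i : ℕ) (hi : 1 ≤ i) :
    ‖iteratedFDeriv ℝ i (fun x' : EuclideanSpace ℝ (Fin d) =>
        Real.sqrt (1 + δ^2 * ‖x' - y‖^2)) x‖
      ≤ (i ! : ℝ)^2 * 2^i * δ^i := by
  set r2 : ℝ := 1 + δ^2 * ‖x - y‖^2 with hr2def
  have hr2_one : 1 ≤ r2 := by
    have : 0 ≤ δ^2 * ‖x - y‖^2 := by positivity
    simp only [hr2def]; linarith
  have hr2_pos : 0 < r2 := by linarith
  set sr : ℝ := Real.sqrt r2 with hsrdef
  have hsr_one : 1 ≤ sr := by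
    rw [hsrdef, show (1:ℝ) = Real.sqrt 1 by simp]
    exact Real.sqrt_le_sqrt hr2_one
  have hsr_pos : 0 < sr := by linarith
  have hsr_sq : sr * sr = r2 := Real.mul_self_sqrt hr2_pos.le
  set a : ℝ := δ^2 / r2 with hadef
  have ha_pos : 0 < a := by positivity
  set g : ℝ → ℝ := fun u => (1 + r2*u) ^ ((1:ℝ)/2) with hgdef
  set p : EuclideanSpace ℝ (Fin d) → ℝ := fun x' => a * ‖x' - y‖^2 with hpdef
  set t : Set ℝ := Set.Ioi (-(1/r2)) with htdef
  have hr2a : ∀ c : ℝ, r2 * (a * c) = δ^2 * c := by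
    intro c; rw [hadef]; field_simp
  have hcomp : (fun x' : EuclideanSpace ℝ (Fin d) => Real.sqrt (1 + δ^2 * ‖x' - y‖^2)) = g ∘ p := by
    funext x'
    simp only [Function.comp_apply, hgdef, hpdef, hr2a]
    rw [Real.sqrt_eq_rpow]
  have hmapsto : MapsTo p univ t := by
    intro x' _
    have h0 : 0 ≤ p x' := by positivity
    have h1 : (0:ℝ) < 1/r2 := by positivity
    simp only [htdef, mem_Ioi]; linarith
  have hpx_mem : p x ∈ t := hmapsto (mem_univ x)
  have hpos_t : ∀ u ∈ t, 0 < 1 + r2 * u := by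
    intro u hu
    have h1 : -(1/r2) < u := hu
    have h2 : r2 * (-(1/r2)) < r2 * u := (mul_lt_mul_iff_right₀ hr2_pos).2 h1
    have h3 : r2 * (-(1/r2)) = -1 := by field_simp
    nlinarith [h2, h3]
  have hg_cd : ContDiffOn ℝ (i : WithTop ℕ∞) g t := by
    intro u hu
    have hlin' : ContDiff ℝ (i : WithTop ℕ∞) (fun u : ℝ => 1 + r2 * u) := by
      fun_prop
    have hlin : ContDiffAt ℝ (i : WithTop ℕ∞) (fun u : ℝ => 1 + r2 * u) u :=
      hlin'.contDiffAt
    exact (hlin.rpow_const_of_ne (hpos_t u hu).ne').contDiffWithinAt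
  have hq : ContDiff ℝ (i : WithTop ℕ∞)
      (fun x' : EuclideanSpace ℝ (Fin d) => ‖x' - y‖^2) :=
    ContDiff.norm_sq (𝕜 := ℝ) (contDiff_id.sub contDiff_const)
  have hp_cd : ContDiffOn ℝ (i : WithTop ℕ∞) p univ :=
    (contDiff_const.mul hq).contDiffOn
  -- bound on the derivatives of g at p x
  have h1px : 1 + r2 * p x = r2 := by
    show 1 + r2 * (a * ‖x - y‖ ^ 2) = r2
    rw [hr2a]
  have hC : ∀ k, k ≤ i → ‖iteratedFDerivWithin ℝ k g t (p x)‖ ≤ (i ! : ℝ) * sr := by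
    intro k hk
    rw [iteratedFDerivWithin_of_isOpen k isOpen_Ioi hpx_mem,
      norm_iteratedFDeriv_eq_norm_iteratedDeriv,
      iteratedDeriv_sqrt_affine r2 hr2_pos k (p x) hpx_mem, h1px]
    have hr2k : (r2:ℝ)^k * r2 ^ ((1:ℝ)/2 - k) = sr := by
      rw [← Real.rpow_natCast r2 k, ← Real.rpow_add hr2_pos, hsrdef, Real.sqrt_eq_rpow]
      norm_num
    rw [mul_assoc, hr2k, Real.norm_eq_abs, abs_mul]
    have h1 : |∏ j ∈ Finset.range k, ((1:ℝ)/2 - j)| ≤ (k ! : ℝ) := abs_prod_half_sub_le k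
    have h2 : (k ! : ℝ) ≤ (i ! : ℝ) := Nat.cast_le.2 (Nat.factorial_le hk)
    have h3 : |sr| = sr := abs_of_pos hsr_pos
    rw [h3]
    exact mul_le_mul (h1.trans h2) le_rfl hsr_pos.le (Nat.cast_nonneg _)
  -- bound on the derivatives of p
  set A : EuclideanSpace ℝ (Fin d) →L[ℝ] EuclideanSpace ℝ (Fin d) →L[ℝ] ℝ := (2*a) • (innerSL ℝ) with hAdef
  have hfd : ∀ z : EuclideanSpace ℝ (Fin d), HasFDerivAt p (A (z - y)) z := by
    intro z
    have hbase : HasFDerivAt (fun x' : EuclideanSpace ℝ (Fin d) => ‖x' - y‖^2)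
        (2 • (innerSL ℝ (z - y)).comp (ContinuousLinearMap.id ℝ (EuclideanSpace ℝ (Fin d)))) z :=
      HasFDerivAt.norm_sq ((hasFDerivAt_id z).sub_const y)
    have := hbase.const_mul a
    refine this.congr_fderiv ?_
    ext v
    simp only [hAdef, ContinuousLinearMap.smul_apply, ContinuousLinearMap.coe_smul',
      Pi.smul_apply, ContinuousLinearMap.coe_comp', Function.comp_apply,
      ContinuousLinearMap.coe_id', id_eq, smul_eq_mul]
    ring
  have hfderiv : fderiv ℝ p = fun z => A (z - y) := funext fun z => (hfd z).fderiv
  have hfderiv2 : fderiv ℝ (fderiv ℝ p) = fun _ => A := by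
    rw [hfderiv]
    funext z
    have heq : (fun z : EuclideanSpace ℝ (Fin d) => A (z - y)) = fun z : EuclideanSpace ℝ (Fin d) => A z - A y := by
      funext w; rw [map_sub]
    rw [heq]
    exact (A.hasFDerivAt.sub_const (A y)).fderiv
  have hxysr : δ * ‖x - y‖ ≤ sr := by
    rw [hsrdef]
    rw [Real.le_sqrt (by positivity) hr2_pos.le]
    rw [hr2def]
    have : (δ * ‖x - y‖)^2 = δ^2 * ‖x - y‖^2 := by ring
    rw [this]; linarith
  have hD : ∀ j, 1 ≤ j → j ≤ i →
      ‖iteratedFDerivWithin ℝ j p univ x‖ ≤ (2*δ/sr)^j := by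
    intro j hj1 _
    rw [iteratedFDerivWithin_univ]
    have hAv : ∀ v : EuclideanSpace ℝ (Fin d), ‖A v‖ = 2*a*‖v‖ := by
      intro v
      rw [hAdef, ContinuousLinearMap.smul_apply, norm_smul, Real.norm_eq_abs,
        abs_of_pos (show (0:ℝ) < 2*a by positivity), innerSL_apply_norm]
    have hnormA : ‖A‖ ≤ 2*a :=
      ContinuousLinearMap.opNorm_le_bound A (by positivity) (fun v => le_of_eq (hAv v))
    rcases j with _ | _ | _ | m
    · omega
    · -- j = 1
      have h1 : ‖iteratedFDeriv ℝ 1 p x‖ = ‖fderiv ℝ p x‖ := by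
        rw [← norm_iteratedFDeriv_fderiv, norm_iteratedFDeriv_zero]
      rw [h1, hfderiv]
      rw [hAv (x - y), pow_one]
      -- 2*a*‖x-y‖ = 2*δ²*‖x-y‖/r2 ≤ 2δ/sr
      have h2a : 2*a*‖x - y‖ = (2*δ^2*‖x - y‖)/r2 := by rw [hadef]; ring
      rw [h2a, div_le_div_iff₀ hr2_pos hsr_pos]
      calc 2*δ^2*‖x - y‖*sr = (2*δ*sr)*(δ*‖x - y‖) := by ring
        _ ≤ (2*δ*sr)*sr := by
            exact mul_le_mul_of_nonneg_left hxysr (by positivity)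
        _ = 2*δ*(sr*sr) := by ring
        _ = 2*δ*r2 := by rw [hsr_sq]
    · -- j = 2
      have h1 : ‖iteratedFDeriv ℝ 2 p x‖ = ‖fderiv ℝ (fderiv ℝ p) x‖ := by
        rw [show (2:ℕ) = 1 + 1 from rfl, ← norm_iteratedFDeriv_fderiv,
          ← norm_iteratedFDeriv_fderiv, norm_iteratedFDeriv_zero]
      rw [h1, hfderiv2]
      calc ‖A‖ ≤ 2*a := hnormA
        _ ≤ (2*δ/sr)^2 := by
            have h2a2 : 2*a = (2*δ^2)/r2 := by rw [hadef]; ring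
            have hsr2 : sr^2 = r2 := by rw [sq]; exact hsr_sq
            rw [h2a2, div_pow, hsr2, div_le_div_iff₀ hr2_pos hr2_pos]
            nlinarith [mul_nonneg (sq_nonneg δ) hr2_pos.le]
    · -- j = m + 3
      have h1 : ‖iteratedFDeriv ℝ (m+3) p x‖
          = ‖iteratedFDeriv ℝ (m+1) (fderiv ℝ (fderiv ℝ p)) x‖ := by
        rw [norm_iteratedFDeriv_fderiv, norm_iteratedFDeriv_fderiv]
      rw [h1, hfderiv2, iteratedFDeriv_const_of_ne (Nat.succ_ne_zero m)]
      simp only [Pi.zero_apply, norm_zero]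
      positivity
  have key := norm_iteratedFDerivWithin_comp_le (𝕜 := ℝ) hg_cd hp_cd le_rfl
    (uniqueDiffOn_Ioi _) uniqueDiffOn_univ hmapsto (mem_univ x) hC hD
  rw [← iteratedFDerivWithin_univ, hcomp]
  refine key.trans ?_
  -- i! * (i! * sr) * (2δ/sr)^i ≤ i!² * 2^i * δ^i
  have hsr_le : sr ≤ sr^i := le_self_pow₀ hsr_one (by omega)
  have h1 : (2*δ/sr)^i = (2*δ)^i / sr^i := div_pow _ _ _
  rw [h1]
  rw [div_eq_mul_inv, show ((i !:ℝ) * ((i !:ℝ) * sr) * ((2*δ)^i * (sr^i)⁻¹))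
      = ((i !:ℝ)^2 * (2*δ)^i) * (sr * (sr^i)⁻¹) by ring]
  have h2 : sr * (sr^i)⁻¹ ≤ 1 := by
    rw [← div_eq_mul_inv, div_le_one (by positivity)]
    exact hsr_le
  calc (i !:ℝ)^2 * (2*δ)^i * (sr * (sr^i)⁻¹) ≤ (i !:ℝ)^2 * (2*δ)^i * 1 := by
        apply mul_le_mul_of_nonneg_left h2 (by positivity)
    _ = (i !:ℝ)^2 * 2^i * δ^i := by rw [mul_pow]; ring

set_option maxHeartbeats 1000000 in
/-- For every dimension `d ≥ 1` and every `n` there is a constant `A_n < ∞` such that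
`‖∇ⁿφ_{δ,y}(x)‖ ≤ A_n δⁿ φ_{δ,y}(x)` for all `δ > 0`, `y`, `x`. -/
theorem weight_iteratedFDeriv_bound (d : ℕ) (hd : 1 ≤ d) (n : ℕ) :
    ∃ A : ℝ, ∀ δ : ℝ, 0 < δ → ∀ y x : EuclideanSpace ℝ (Fin d),
      ‖iteratedFDeriv ℝ n (phi d δ y) x‖ ≤ A * δ ^ n * phi d δ y x := by
  set M : ℝ := (n ! : ℝ)^2 * 2^n + 1 with hMdef
  have hM1 : 1 ≤ M := by
    have : (0:ℝ) ≤ (n ! : ℝ)^2 * 2^n := by positivity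
    rw [hMdef]; linarith
  refine ⟨(n ! : ℝ) * M^n, ?_⟩
  intro δ hδ y x
  set f : EuclideanSpace ℝ (Fin d) → ℝ :=
    fun x' => -(Real.sqrt (1 + δ^2 * ‖x' - y‖^2)) with hfdef
  have hphi : phi d δ y = Real.exp ∘ f := rfl
  have hpos : ∀ x' : EuclideanSpace ℝ (Fin d), (0:ℝ) < 1 + δ^2 * ‖x' - y‖^2 := by
    intro x'; positivity
  have hs_cd : ContDiff ℝ (n : WithTop ℕ∞)
      (fun x' : EuclideanSpace ℝ (Fin d) => Real.sqrt (1 + δ^2 * ‖x' - y‖^2)) := by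
    apply ContDiff.sqrt
    · exact contDiff_const.add (contDiff_const.mul
        (ContDiff.norm_sq (𝕜 := ℝ) (contDiff_id.sub contDiff_const)))
    · intro x'; exact (hpos x').ne'
  have hf_cd : ContDiff ℝ (n : WithTop ℕ∞) f := hs_cd.neg
  have hg_cd : ContDiff ℝ (n : WithTop ℕ∞) Real.exp := Real.contDiff_exp.of_le le_top
  have hC : ∀ k, k ≤ n → ‖iteratedFDeriv ℝ k Real.exp (f x)‖ ≤ Real.exp (f x) := by
    intro k _
    rw [norm_iteratedFDeriv_eq_norm_iteratedDeriv, iteratedDeriv_eq_iterate,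
      Real.iter_deriv_exp]
    rw [Real.norm_eq_abs, abs_of_pos (Real.exp_pos _)]
  have hD : ∀ i, 1 ≤ i → i ≤ n → ‖iteratedFDeriv ℝ i f x‖ ≤ (M * δ)^i := by
    intro i hi1 hin
    have hneg : ‖iteratedFDeriv ℝ i f x‖
        = ‖iteratedFDeriv ℝ i (fun x' : EuclideanSpace ℝ (Fin d) =>
            Real.sqrt (1 + δ^2 * ‖x' - y‖^2)) x‖ := by
      rw [hfdef]
      rw [show (fun x' : EuclideanSpace ℝ (Fin d) =>
          -(Real.sqrt (1 + δ^2 * ‖x' - y‖^2)))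
        = -(fun x' : EuclideanSpace ℝ (Fin d) =>
            Real.sqrt (1 + δ^2 * ‖x' - y‖^2)) from rfl]
      rw [iteratedFDeriv_neg_apply, norm_neg]
    rw [hneg]
    refine (sqrt_deriv_bound d δ hδ y x i hi1).trans ?_
    have h1 : (i ! : ℝ)^2 * 2^i ≤ M := by
      rw [hMdef]
      have hf1 : (i ! : ℝ) ≤ (n ! : ℝ) := Nat.cast_le.2 (Nat.factorial_le hin)
      have hf0 : (0:ℝ) ≤ (i ! : ℝ) := Nat.cast_nonneg _
      have h2 : (2:ℝ)^i ≤ 2^n := pow_le_pow_right₀ (by norm_num) hin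
      nlinarith [pow_pos (show (0:ℝ) < 2 by norm_num) i,
        mul_le_mul hf1 hf1 hf0 (Nat.cast_nonneg _)]
    have h2 : M ≤ M^i := le_self_pow₀ hM1 (by omega)
    calc (i ! : ℝ)^2 * 2^i * δ^i ≤ M^i * δ^i := by
          apply mul_le_mul_of_nonneg_right (h1.trans h2) (by positivity)
      _ = (M * δ)^i := by rw [mul_pow]
  have key := norm_iteratedFDeriv_comp_le hg_cd hf_cd le_rfl x hC hD
  rw [hphi]
  refine key.trans (le_of_eq ?_)
  simp only [Function.comp_apply]
  rw [mul_pow]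
  ring
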